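/- Let Λ ≥ λ > 0, ω = Λ/λ, and γ ∈ [1/√ω, √ω]. For (x,y) with π/2 ≤ x ≤ π/2 + √ω·arcsin(1/(γ√ω)) and |y| ≤ arccos(γ√ω·sin((x-π/2)/√ω)), the function u(x,y) = γ√ω·cos((x-π/2)/√ω + π/2) + cos y satisfies -M⁺(D²u) = λ·u. -/

import Mathlib

open Real

noncomputable def pucci (lam Lam α β δ : ℝ) : ℝ :=
  (lam * min ((α + δ) / 2 + Real.sqrt (((α - δ) / 2) ^ 2 + β ^ 2)) 0
    + Lam * max ((α + δ) / 2 + Real.sqrt (((α - δ) / 2) ^ 2 + β ^ 2)) 0)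
  + (lam * min ((α + δ) / 2 - Real.sqrt (((α - δ) / 2) ^ 2 + β ^ 2)) 0
    + Lam * max ((α + δ) / 2 - Real.sqrt (((α - δ) / 2) ^ 2 + β ^ 2)) 0)

noncomputable def pxx (u : ℝ → ℝ → ℝ) (x y : ℝ) : ℝ :=
  deriv (fun t => deriv (fun s => u s y) t) x

noncomputable def pyy (u : ℝ → ℝ → ℝ) (x y : ℝ) : ℝ :=
  deriv (fun t => deriv (fun s => u x s) t) y

noncomputable def pxy (u : ℝ → ℝ → ℝ) (x y : ℝ) : ℝ :=
  deriv (fun t => deriv (fun s => u s t) x) y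

lemma pucci_eval (lam Lam α δ : ℝ) (hα : 0 ≤ α) (hδ : δ ≤ 0) :
    pucci lam Lam α 0 δ = Lam * α + lam * δ := by
  have h1 : ((α - δ) / 2) ^ 2 + 0 ^ 2 = ((α - δ) / 2) ^ 2 := by ring
  have h2 : Real.sqrt (((α - δ) / 2) ^ 2) = (α - δ) / 2 :=
    Real.sqrt_sq (by linarith)
  unfold pucci
  rw [h1, h2]
  have e1 : (α + δ) / 2 + (α - δ) / 2 = α := by ring
  have e2 : (α + δ) / 2 - (α - δ) / 2 = δ := by ring
  rw [e1, e2, min_eq_right hα, max_eq_left hα, min_eq_left hδ, max_eq_right hδ]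
  ring

/-- For `Λ ≥ λ > 0`, `ω = Λ/λ`, `γ ∈ [1/√ω, √ω]`, and `(x,y)` with
`π/2 ≤ x ≤ π/2 + √ω·arcsin(1/(γ√ω))` and `|y| ≤ arccos(γ√ω·sin((x-π/2)/√ω))`, the function
`u(x,y) = γ√ω·cos((x-π/2)/√ω + π/2) + cos y` satisfies `-M⁺(D²u) = λ·u`. -/
theorem stmt7 (lam Lam om ga : ℝ) (hlam : 0 < lam) (hLam : lam ≤ Lam) (hom : om = Lam / lam)
    (hga1 : 1 / Real.sqrt om ≤ ga) (hga2 : ga ≤ Real.sqrt om)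
    (u : ℝ → ℝ → ℝ)
    (hu : u = fun a b =>
      ga * Real.sqrt om * Real.cos ((a - π / 2) / Real.sqrt om + π / 2) + Real.cos b)
    (x y : ℝ) (hx1 : π / 2 ≤ x)
    (hx2 : x ≤ π / 2 + Real.sqrt om * Real.arcsin (1 / (ga * Real.sqrt om)))
    (hy : |y| ≤ Real.arccos (ga * Real.sqrt om * Real.sin ((x - π / 2) / Real.sqrt om))) :
    -pucci lam Lam (pxx u x y) (pxy u x y) (pyy u x y) = lam * u x y := by
  subst hu hom
  set c := Real.sqrt (Lam / lam) with hc
  have hom1 : (1 : ℝ) ≤ Lam / lam := (one_le_div hlam).2 hLam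
  have hc1 : 1 ≤ c := by
    rw [hc]; nlinarith [Real.sq_sqrt (by linarith : (0:ℝ) ≤ Lam / lam),
      Real.sqrt_nonneg (Lam / lam)]
  have hcpos : 0 < c := lt_of_lt_of_le one_pos hc1
  have hc2 : c * c = Lam / lam := Real.mul_self_sqrt (by linarith)
  have hgapos : 0 < ga := lt_of_lt_of_le (by positivity) hga1
  have hgac : 1 ≤ ga * c := by
    have := hga1
    rw [div_le_iff₀ hcpos] at this
    linarith
  set s : ℝ := (x - π / 2) / c with hs
  -- derivatives
  have hlin : ∀ t : ℝ, HasDerivAt (fun a : ℝ => (a - π / 2) / c + π / 2) (1 / c) t := by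
    intro t
    simpa using (((hasDerivAt_id t).sub_const (π / 2)).div_const c).add_const (π / 2)
  have hd1 : ∀ b t : ℝ,
      HasDerivAt (fun a => ga * c * Real.cos ((a - π / 2) / c + π / 2) + Real.cos b)
        (ga * c * (-Real.sin ((t - π / 2) / c + π / 2) * (1 / c))) t := by
    intro b t
    exact (((hlin t).cos).const_mul (ga * c)).add_const (Real.cos b)
  have e1 : ∀ b : ℝ, (fun t => deriv
        (fun a => ga * c * Real.cos ((a - π / 2) / c + π / 2) + Real.cos b) t)
      = fun t => -(ga * Real.sin ((t - π / 2) / c + π / 2)) := by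
    intro b
    funext t
    rw [(hd1 b t).deriv]
    field_simp
  have hpxx : pxx (fun a b =>
      ga * c * Real.cos ((a - π / 2) / c + π / 2) + Real.cos b) x y
      = ga * Real.sin s / c := by
    unfold pxx
    rw [e1 y]
    have h2 : HasDerivAt (fun t => -(ga * Real.sin ((t - π / 2) / c + π / 2)))
        (-(ga * (Real.cos ((x - π / 2) / c + π / 2) * (1 / c)))) x :=
      ((((hlin x).sin).const_mul ga).neg)
    rw [h2.deriv, Real.cos_add_pi_div_two]
    ring
  have hpyy : pyy (fun a b =>
      ga * c * Real.cos ((a - π / 2) / c + π / 2) + Real.cos b) x y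
      = -Real.cos y := by
    unfold pyy
    have e2 : (fun t => deriv (fun b =>
        ga * c * Real.cos ((x - π / 2) / c + π / 2) + Real.cos b) t)
        = fun t => -Real.sin t := by
      funext t
      rw [((Real.hasDerivAt_cos t).const_add
        (ga * c * Real.cos ((x - π / 2) / c + π / 2))).deriv]
    rw [e2]; exact ((Real.hasDerivAt_sin y).neg).deriv
  have hpxy : pxy (fun a b =>
      ga * c * Real.cos ((a - π / 2) / c + π / 2) + Real.cos b) x y = 0 := by
    unfold pxy
    have e3 : (fun t => deriv (fun a =>
        ga * c * Real.cos ((a - π / 2) / c + π / 2) + Real.cos t) x)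
        = fun _ : ℝ => -(ga * Real.sin ((x - π / 2) / c + π / 2)) := by
      funext t
      rw [(hd1 t x).deriv]
      field_simp
    rw [e3, deriv_const]
  -- sign facts
  have harcsin_le : Real.arcsin (1 / (ga * c)) ≤ π / 2 := Real.arcsin_le_pi_div_two _
  have hs0 : 0 ≤ s := by
    apply div_nonneg (by linarith) hcpos.le
  have hsle : s ≤ Real.arcsin (1 / (ga * c)) := by
    rw [hs, div_le_iff₀ hcpos]
    nlinarith
  have hsin0 : 0 ≤ Real.sin s :=
    Real.sin_nonneg_of_nonneg_of_le_pi hs0 (by linarith [Real.pi_pos])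
  have hsin1 : Real.sin s ≤ 1 / (ga * c) := by
    calc Real.sin s ≤ Real.sin (Real.arcsin (1 / (ga * c))) :=
          Real.sin_le_sin_of_le_of_le_pi_div_two (by linarith) harcsin_le hsle
      _ = 1 / (ga * c) := Real.sin_arcsin
            (by have h : (0:ℝ) < 1 / (ga * c) := by positivity
                linarith)
            (by rw [div_le_one (by positivity)]; exact hgac)
  have ht0 : 0 ≤ ga * c * Real.sin s := by positivity
  have ht1 : ga * c * Real.sin s ≤ 1 := by
    have := mul_le_mul_of_nonneg_left hsin1 (by positivity : (0:ℝ) ≤ ga * c)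
    calc ga * c * Real.sin s ≤ ga * c * (1 / (ga * c)) := this
      _ = 1 := by field_simp
  have hcosy : 0 ≤ Real.cos y := by
    have h1 : Real.cos (Real.arccos (ga * c * Real.sin s)) ≤ Real.cos |y| :=
      Real.cos_le_cos_of_nonneg_of_le_pi (abs_nonneg y)
        (Real.arccos_le_pi _) hy
    rw [Real.cos_arccos (by linarith) ht1] at h1
    calc (0:ℝ) ≤ ga * c * Real.sin s := ht0
      _ ≤ Real.cos |y| := h1
      _ = Real.cos y := Real.cos_abs y
  -- conclude
  rw [hpxx, hpyy, hpxy,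
    pucci_eval lam Lam _ _ (by positivity) (by linarith)]
  simp only [Real.cos_add_pi_div_two]
  have hLameq : Lam = lam * (c * c) := by
    rw [hc2]; field_simp
  rw [hLameq]
  field_simp
  rw [hs]; ring_nf
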